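/- Let n, m ≥ 2 be natural numbers and let c ≥ 1 be a natural number such that for every prime p dividing c there exists a natural number k ≥ 1 with p^k ≥ 3, φ(p^k) ∣ n, and m ≤ p^k − 1. Then for every nonnegative integer b, the number of m-tuples (x_1,…,x_m) of nonnegative integers with x_1^n + ⋯ + x_m^n = b·c^n equals the number of m-tuples of nonnegative integers with x_1^n + ⋯ + x_m^n = b. -/

import Mathlib

/-- Key lemma: if `φ(p^k) ∣ n`, `p^k ≥ 3`, `m ≤ p^k - 1` and `∑ xᵢⁿ = pⁿ t`, then `p ∣ xᵢ`. -/
lemma key_lemma (p n k m : ℕ) (hp : p.Prime) (hk : 1 ≤ k) (h3 : 3 ≤ p ^ k)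
    (hdvd : Nat.totient (p ^ k) ∣ n) (hmn : m ≤ p ^ k - 1) (hn : 1 ≤ n)
    (t : ℕ) (x : Fin m → ℕ) (hx : ∑ i, x i ^ n = p ^ n * t) :
    ∀ i, p ∣ x i := by
  have hφk : k ≤ Nat.totient (p ^ k) := by
    rw [Nat.totient_prime_pow hp hk]
    have h1 : k ≤ 2 ^ (k - 1) := by
      have := Nat.lt_two_pow_self (n := k - 1); omega
    have h2 : 2 ^ (k - 1) ≤ p ^ (k - 1) := Nat.pow_le_pow_left hp.two_le _
    calc k ≤ p ^ (k - 1) := le_trans h1 h2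
      _ ≤ p ^ (k - 1) * (p - 1) := Nat.le_mul_of_pos_right _ (by have := hp.two_le; omega)
  have hkn : k ≤ n :=
    le_trans hφk (Nat.le_of_dvd (by omega) hdvd)
  set q := p ^ k with hqdef
  haveI : NeZero q := ⟨by omega⟩
  have hcast : ((∑ i, x i ^ n : ℕ) : ZMod q) = 0 := by
    rw [hx, Nat.cast_mul]
    have h0 : ((p ^ n : ℕ) : ZMod q) = 0 :=
      (ZMod.natCast_eq_zero_iff _ _).mpr (pow_dvd_pow p hkn)
    rw [h0, zero_mul]
  have hterm : ∀ j : Fin m, ((x j : ZMod q)) ^ n = if p ∣ x j then 0 else 1 := by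
    intro j
    split_ifs with hpj
    · have hdq : q ∣ x j ^ n :=
        dvd_trans (pow_dvd_pow_of_dvd hpj k) (pow_dvd_pow _ hkn)
      have : ((x j ^ n : ℕ) : ZMod q) = 0 :=
        (ZMod.natCast_eq_zero_iff _ _).mpr hdq
      rw [← this]; push_cast; ring
    · have hco : Nat.Coprime (x j) q := by
        exact Nat.Coprime.pow_right k (Nat.coprime_comm.mp ((hp.coprime_iff_not_dvd).mpr hpj))
      have hu : IsUnit ((x j : ZMod q)) := (ZMod.isUnit_iff_coprime _ _).mpr hco
      obtain ⟨u, hu⟩ := hu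
      obtain ⟨d, hd⟩ := hdvd
      have : u ^ n = 1 := by
        rw [hd, pow_mul, ZMod.pow_totient u, one_pow]
      calc (x j : ZMod q) ^ n = ((u : ZMod q)) ^ n := by rw [hu]
        _ = ((u ^ n : (ZMod q)ˣ) : ZMod q) := by push_cast; ring
        _ = 1 := by rw [this]; rfl
  have hsum : ((Finset.univ.filter (fun j : Fin m => ¬ p ∣ x j)).card : ZMod q) = 0 := by
    have h1 : ((∑ i, x i ^ n : ℕ) : ZMod q) = ∑ i, ((x i : ZMod q)) ^ n := by push_cast; ring
    rw [h1] at hcast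
    rw [Finset.sum_congr rfl (fun j _ => hterm j)] at hcast
    have h2 : (∑ j : Fin m, if p ∣ x j then (0 : ZMod q) else 1) =
        (∑ j : Fin m, if ¬ p ∣ x j then (1 : ZMod q) else 0) := by
      apply Finset.sum_congr rfl
      intro j _
      by_cases h : p ∣ x j <;> simp [h]
    rw [h2, Finset.sum_boole] at hcast
    exact hcast
  have hdvdcard : q ∣ (Finset.univ.filter (fun j : Fin m => ¬ p ∣ x j)).card :=
    (ZMod.natCast_eq_zero_iff _ _).mp hsum
  have hle : (Finset.univ.filter (fun j : Fin m => ¬ p ∣ x j)).card ≤ m := by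
    simpa using Finset.card_filter_le Finset.univ (fun j : Fin m => ¬ p ∣ x j)
  have hzero : (Finset.univ.filter (fun j : Fin m => ¬ p ∣ x j)).card = 0 := by
    rcases Nat.eq_zero_or_pos (Finset.univ.filter (fun j : Fin m => ¬ p ∣ x j)).card with h | h
    · exact h
    · exfalso
      have := Nat.le_of_dvd h hdvdcard
      omega
  intro i
  by_contra hpi
  have : i ∈ Finset.univ.filter (fun j : Fin m => ¬ p ∣ x j) := by
    simp [hpi]
  rw [Finset.card_eq_zero] at hzero
  simp [hzero] at this

/-- Scaling bijection: if every solution of `∑ xᵢⁿ = pⁿ t` has all entries divisible by `p`,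
the solution counts for `pⁿ t` and `t` agree. -/
lemma card_scale (n m p t : ℕ) (hp : 0 < p)
    (hall : ∀ x : Fin m → ℕ, ∑ i, x i ^ n = p ^ n * t → ∀ i, p ∣ x i) :
    Nat.card {x : Fin m → ℕ // ∑ i, x i ^ n = p ^ n * t} =
    Nat.card {x : Fin m → ℕ // ∑ i, x i ^ n = t} := by
  symm
  apply Nat.card_eq_of_bijective
    (fun y : {x : Fin m → ℕ // ∑ i, x i ^ n = t} =>
      (⟨fun i => p * y.1 i, by
        have : ∑ i, (p * y.1 i) ^ n = p ^ n * ∑ i, y.1 i ^ n := by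
          rw [Finset.mul_sum]
          exact Finset.sum_congr rfl (fun i _ => mul_pow p (y.1 i) n)
        rw [this, y.2]⟩ : {x : Fin m → ℕ // ∑ i, x i ^ n = p ^ n * t}))
  constructor
  · intro y y' h
    apply Subtype.ext
    funext i
    have := congrFun (congrArg Subtype.val h) i
    exact Nat.eq_of_mul_eq_mul_left hp this
  · rintro ⟨x, hxs⟩
    refine ⟨⟨fun i => x i / p, ?_⟩, ?_⟩
    · have hx : ∀ i, x i = p * (x i / p) := fun i =>
        (Nat.mul_div_cancel' (hall x hxs i)).symm
      have h1 : ∑ i, x i ^ n = p ^ n * ∑ i, (x i / p) ^ n := by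
        rw [Finset.mul_sum]
        apply Finset.sum_congr rfl
        intro i _
        rw [← mul_pow]
        exact congrArg (· ^ n) (hx i)
      rw [h1] at hxs
      exact Nat.eq_of_mul_eq_mul_left (by positivity) hxs
    · apply Subtype.ext
      funext i
      exact Nat.mul_div_cancel' (hall x hxs i)

lemma main_aux (n m : ℕ) (hn : 2 ≤ n) (hm : 2 ≤ m) :
    ∀ c : ℕ, 1 ≤ c →
    (∀ p : ℕ, p.Prime → p ∣ c →
      ∃ k : ℕ, 1 ≤ k ∧ 3 ≤ p ^ k ∧ Nat.totient (p ^ k) ∣ n ∧ m ≤ p ^ k - 1) →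
    ∀ b : ℕ,
      Nat.card {x : Fin m → ℕ // ∑ i, x i ^ n = b * c ^ n} =
      Nat.card {x : Fin m → ℕ // ∑ i, x i ^ n = b} := by
  intro c
  induction c using Nat.strong_induction_on with
  | _ c ih =>
    intro hc hφ b
    rcases eq_or_ne c 1 with rfl | hne
    · simp
    · obtain ⟨p, hp, hpc⟩ := Nat.exists_prime_and_dvd hne
      obtain ⟨c', rfl⟩ := hpc
      have hc' : 1 ≤ c' := by
        rcases Nat.eq_zero_or_pos c' with rfl | h
        · simp at hc
        · exact h
      have hlt : c' < p * c' := by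
        have := hp.two_le
        calc c' = 1 * c' := (one_mul c').symm
          _ < p * c' := by
            apply Nat.mul_lt_mul_of_lt_of_le <;> omega
      obtain ⟨k, hk1, hk3, hkd, hkm⟩ := hφ p hp ⟨c', rfl⟩
      have heq : b * (p * c') ^ n = p ^ n * (b * c' ^ n) := by
        rw [mul_pow]; ring
      rw [heq]
      rw [card_scale n m p (b * c' ^ n) hp.pos
        (fun x hx => key_lemma p n k m hp hk1 hk3 hkd hkm (by omega) _ x hx)]
      exact ih c' hlt hc'
        (fun q hq hqc => hφ q hq (hqc.trans (Dvd.intro_left p rfl))) b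

/-- If `n, m ≥ 2` and `c ≥ 1` is such that every prime `p ∣ c` admits `k ≥ 1` with `p^k ≥ 3`,
`φ(p^k) ∣ n` and `m ≤ p^k - 1`, then for every `b` the number of `m`-tuples of nonnegative
integers with `∑ xᵢ^n = b·c^n` equals the number with `∑ xᵢ^n = b`. -/
theorem stmt_6 (n m c : ℕ) (hn : 2 ≤ n) (hm : 2 ≤ m) (hc : 1 ≤ c)
    (hφ : ∀ p : ℕ, p.Prime → p ∣ c →
      ∃ k : ℕ, 1 ≤ k ∧ 3 ≤ p ^ k ∧ Nat.totient (p ^ k) ∣ n ∧ m ≤ p ^ k - 1) :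
    ∀ b : ℕ,
      Nat.card {x : Fin m → ℕ // ∑ i, x i ^ n = b * c ^ n} =
      Nat.card {x : Fin m → ℕ // ∑ i, x i ^ n = b} := by
  exact main_aux n m hn hm c hc hφ
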